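/- (Uniqueness for BV coefficient) Let λ:[0,T] → (0,∞) be of bounded variation with c₀ = inf λ([0,T]) > 0. Then the strong solution (x,v):[0,T] → H×H of v(t) ∈ ∂φ(x(t)), λ(t)ẋ(t) + v̇(t) + v(t) + ∇ψ(x(t)) = 0 a.e., x(0)=x₀, v(0)=v₀ is unique: any two strong solutions with the same initial data coincide on [0,T]. -/

import Mathlib

open MeasureTheory Set Filter
open scoped Topology

set_option linter.unusedSectionVars false
set_option maxHeartbeats 1600000

variable {H : Type*} [NormedAddCommGroup H] [InnerProductSpace ℝ H] [CompleteSpace H]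

/-- `v` belongs to the convex subdifferential of `φ` at `x`. -/
def IsSubdiff (φ : H → EReal) (x v : H) : Prop :=
  ∀ y : H, φ x + ((inner ℝ v (y - x) : ℝ) : EReal) ≤ φ y

/-- `φ` is proper, convex and lower semicontinuous. -/
def ProperConvexLSC (φ : H → EReal) : Prop :=
  (∀ z, φ z ≠ ⊥) ∧ (∃ z, φ z ≠ ⊤) ∧ LowerSemicontinuous φ ∧
  (∀ z w : H, ∀ a b : ℝ, 0 ≤ a → 0 ≤ b → a + b = 1 →
      φ (a • z + b • w) ≤ (a : EReal) * φ z + (b : EReal) * φ w)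

/-- Standing assumptions: `φ` proper convex lsc, `ψ` convex with gradient `ψ'`,
and `φ + ψ` bounded below on `H`. -/
def Standing (φ : H → EReal) (ψ : H → ℝ) (ψ' : H → H) : Prop :=
  ProperConvexLSC φ ∧
  ConvexOn ℝ Set.univ ψ ∧ (∀ z, HasGradientAt ψ (ψ' z) z) ∧
  (∃ m : ℝ, ∀ z, (m : EReal) ≤ φ z + (ψ z : EReal))

/-- The energy gap `(φ+ψ)(x₀) - inf_H (φ+ψ)` as a real number. -/
noncomputable def Egap (φ : H → EReal) (ψ : H → ℝ) (x₀ : H) : ℝ :=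
  ((φ x₀ + (ψ x₀ : EReal)) - sInf (Set.range fun z => φ z + (ψ z : EReal))).toReal

/-- `(x, v)` is a strong (absolutely continuous) solution on `[0, T]` of
`v ∈ ∂φ(x)`, `λ ẋ + v̇ + v + ∇ψ(x) = 0` a.e., with a.e. derivatives `x'`, `v'`. -/
structure StrongSol (φ : H → EReal) (ψ' : H → H) (lam : ℝ → ℝ) (T : ℝ)
    (x v x' v' : ℝ → H) : Prop where
  subdiff : ∀ t ∈ Set.Icc (0:ℝ) T, IsSubdiff φ (x t) (v t)
  xint : IntegrableOn x' (Set.Icc 0 T)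
  vint : IntegrableOn v' (Set.Icc 0 T)
  xrep : ∀ t ∈ Set.Icc (0:ℝ) T, x t = x 0 + ∫ s in (0:ℝ)..t, x' s
  vrep : ∀ t ∈ Set.Icc (0:ℝ) T, v t = v 0 + ∫ s in (0:ℝ)..t, v' s
  xderiv : ∀ᵐ t ∂(volume.restrict (Set.Ioo 0 T)), HasDerivAt x (x' t) t
  vderiv : ∀ᵐ t ∂(volume.restrict (Set.Ioo 0 T)), HasDerivAt v (v' t) t
  eqn : ∀ᵐ t ∂(volume.restrict (Set.Ioo 0 T)),
      lam t • x' t + v' t + v t + ψ' (x t) = 0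

/- ### Auxiliary lemmas -/

lemma subdiff_ne_top {φ : H → EReal} (hpr2 : ∃ z, φ z ≠ ⊤)
    {a va : H} (ha : IsSubdiff φ a va) : φ a ≠ ⊤ := by
  intro h
  obtain ⟨z, hz⟩ := hpr2
  apply hz
  have := ha z
  rw [h] at this
  rw [EReal.top_add_of_ne_bot (by simp)] at this
  exact top_le_iff.1 this

lemma subdiff_mono {φ : H → EReal} (hbot : ∀ z, φ z ≠ ⊥) (hpr2 : ∃ z, φ z ≠ ⊤)
    {a b va vb : H} (ha : IsSubdiff φ a va) (hb : IsSubdiff φ b vb) :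
    0 ≤ (inner ℝ (va - vb) (a - b) : ℝ) := by
  have hat := subdiff_ne_top hpr2 ha
  have hbt := subdiff_ne_top hpr2 hb
  set A := (φ a).toReal with hA
  set B := (φ b).toReal with hB
  have hφa : φ a = (A : EReal) := (EReal.coe_toReal hat (hbot a)).symm
  have hφb : φ b = (B : EReal) := (EReal.coe_toReal hbt (hbot b)).symm
  have h1 : A + (inner ℝ va (b - a) : ℝ) ≤ B := by
    have := ha b
    rw [hφa, hφb, ← EReal.coe_add, EReal.coe_le_coe_iff] at this
    exact this
  have h2 : B + (inner ℝ vb (a - b) : ℝ) ≤ A := by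
    have := hb a
    rw [hφa, hφb, ← EReal.coe_add, EReal.coe_le_coe_iff] at this
    exact this
  have e1 : (inner ℝ va (b - a) : ℝ) = - (inner ℝ va (a - b) : ℝ) := by
    rw [show b - a = -(a-b) by abel, inner_neg_right]
  have e2 : (inner ℝ (va - vb) (a - b) : ℝ)
      = (inner ℝ va (a-b) : ℝ) - (inner ℝ vb (a-b) : ℝ) := by
    rw [inner_sub_left]
  linarith [e1 ▸ h1, e2]

lemma floor_approx {h : ℝ} (hpos : 0 < h) {u : ℝ} (hu : 0 ≤ u) :
    0 ≤ (⌊u/h⌋:ℝ)*h ∧ (⌊u/h⌋:ℝ)*h ≤ u ∧ u - h ≤ (⌊u/h⌋:ℝ)*h := by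
  have hfl0 : (0:ℝ) ≤ (⌊u/h⌋:ℝ) := by
    exact_mod_cast Int.floor_nonneg.2 (div_nonneg hu hpos.le)
  have h1 : (⌊u/h⌋:ℝ) ≤ u/h := Int.floor_le _
  have h2 : (⌊u/h⌋:ℝ) * h ≤ u := by
    have := mul_le_mul_of_nonneg_right h1 hpos.le
    rwa [div_mul_cancel₀ _ hpos.ne'] at this
  have h3 : u - h ≤ (⌊u/h⌋:ℝ)*h := by
    have h4 : u/h < (⌊u/h⌋:ℝ) + 1 := Int.lt_floor_add_one _
    have := mul_lt_mul_of_pos_right h4 hpos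
    rw [div_mul_cancel₀ _ hpos.ne', add_mul, one_mul] at this
    linarith
  exact ⟨mul_nonneg hfl0 hpos.le, h2, h3⟩

lemma sq_le_imp {a b : ℝ} (ha : 0 ≤ a) (hb : 0 ≤ b) (h : a^2 ≤ b^2) : a ≤ b := by
  nlinarith

lemma bv_smul_integrable (lam : ℝ → ℝ) (T : ℝ) (hT : 0 ≤ T)
    (hBV : eVariationOn lam (Set.Icc 0 T) ≠ ⊤)
    (g : ℝ → H) (hg : IntegrableOn g (Set.Icc 0 T)) :
    IntegrableOn (fun t => lam t • g t) (Set.Icc 0 T) := by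
  have hBVY : BoundedVariationOn lam (Set.Icc 0 T) := hBV
  set B : ℝ := |lam 0| + (eVariationOn lam (Set.Icc 0 T)).toReal with hBdef
  have hB : ∀ u ∈ Set.Icc (0:ℝ) T, |lam u| ≤ B := by
    intro u hu
    have := hBVY.dist_le hu (Set.left_mem_Icc.2 hT)
    rw [Real.dist_eq] at this
    calc |lam u| ≤ |lam 0| + |lam u - lam 0| := by
          have := abs_add_le (lam 0) (lam u - lam 0); simpa using this
      _ ≤ B := by rw [hBdef]; linarith
  obtain ⟨p, q, hp, hq, hpq⟩ :=
    (hBVY.locallyBoundedVariationOn).exists_monotoneOn_sub_monotoneOn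
  set c : ℝ → ℝ := fun t => max 0 (min t T) with hcdef
  have hcm : Monotone c := fun a b hab =>
    max_le_max le_rfl (min_le_min hab le_rfl)
  have hcmem : ∀ t, c t ∈ Set.Icc (0:ℝ) T :=
    fun t => ⟨le_max_left _ _, max_le hT (min_le_right _ _)⟩
  have hcid : ∀ t ∈ Set.Icc (0:ℝ) T, c t = t := fun t ht => by
    rw [hcdef]; simp only [min_eq_left ht.2, max_eq_right ht.1]
  set P : ℝ → ℝ := p ∘ c with hPdef
  set Q : ℝ → ℝ := q ∘ c with hQdef
  have hPm : Monotone P := fun a b hab => hp (hcmem a) (hcmem b) (hcm hab)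
  have hQm : Monotone Q := fun a b hab => hq (hcmem a) (hcmem b) (hcm hab)
  have hlamPQ : ∀ t ∈ Set.Icc (0:ℝ) T, lam t = P t - Q t := by
    intro t ht
    have := congrFun hpq t
    simp only [Pi.sub_apply] at this
    simp [hPdef, hQdef, Function.comp, hcid t ht, this]
  have hmeas : AEStronglyMeasurable (fun t => lam t • g t)
      (volume.restrict (Set.Icc 0 T)) := by
    refine (((hPm.measurable.sub hQm.measurable).aestronglyMeasurable).smul
      hg.aestronglyMeasurable).congr ?_
    refine ((ae_restrict_iff' measurableSet_Icc).2 (ae_of_all _ fun t ht => ?_))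
    simp only [Pi.sub_apply]
    rw [hlamPQ t ht]; rfl
  refine Integrable.mono' (hg.norm.const_mul B) hmeas ?_
  refine (ae_restrict_iff' measurableSet_Icc).2 (ae_of_all _ fun t ht => ?_)
  rw [norm_smul, Real.norm_eq_abs]
  exact mul_le_mul_of_nonneg_right (hB _ ht) (norm_nonneg _)

lemma ibp_est (lam : ℝ → ℝ) (T : ℝ) (hT : 0 ≤ T)
    (hBV : eVariationOn lam (Set.Icc 0 T) ≠ ⊤)
    (X X' : ℝ → H) (hXint : IntegrableOn X' (Set.Icc 0 T))
    (hXrep : ∀ a ∈ Set.Icc (0:ℝ) T, ∀ b ∈ Set.Icc (0:ℝ) T, X b - X a = ∫ t in a..b, X' t)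
    (r s : ℝ) (hr : 0 ≤ r) (hrs : r ≤ s) (hsT : s ≤ T)
    (C : ℝ) (hC : ∀ t ∈ Set.Icc r s, ‖X t‖ ≤ C) :
    ‖lam s • X s - lam r • X r - ∫ t in r..s, lam t • X' t‖
      ≤ (eVariationOn lam (Set.Icc r s)).toReal * C := by
  have hC0 : 0 ≤ C := le_trans (norm_nonneg _) (hC r ⟨le_rfl, hrs⟩)
  rcases hrs.eq_or_lt with rfl | hlt
  · simp [mul_nonneg ENNReal.toReal_nonneg hC0]
  -- basic setup
  have hsub : Set.Icc r s ⊆ Set.Icc 0 T := Set.Icc_subset_Icc hr hsT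
  have hVle : eVariationOn lam (Set.Icc r s) ≤ eVariationOn lam (Set.Icc 0 T) :=
    eVariationOn.mono lam hsub
  have hVtop : eVariationOn lam (Set.Icc r s) ≠ ⊤ := ne_top_of_le_ne_top hBV hVle
  set V : ℝ := (eVariationOn lam (Set.Icc r s)).toReal with hVdef
  have hBVY : BoundedVariationOn lam (Set.Icc 0 T) := hBV
  -- bound on lam
  set B : ℝ := |lam 0| + (eVariationOn lam (Set.Icc 0 T)).toReal with hBdef
  have hB : ∀ u ∈ Set.Icc (0:ℝ) T, |lam u| ≤ B := by
    intro u hu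
    have := hBVY.dist_le hu (Set.left_mem_Icc.2 hT)
    rw [Real.dist_eq] at this
    calc |lam u| ≤ |lam 0| + |lam u - lam 0| := by
          have := abs_add_le (lam 0) (lam u - lam 0); simpa using this
      _ ≤ B := by rw [hBdef]; linarith
  -- Jordan decomposition and a.e. continuity of lam
  obtain ⟨p, q, hp, hq, hpq⟩ :=
    (hBVY.locallyBoundedVariationOn).exists_monotoneOn_sub_monotoneOn
  set c : ℝ → ℝ := fun t => max 0 (min t T) with hcdef
  have hcm : Monotone c := fun a b hab =>
    max_le_max le_rfl (min_le_min hab le_rfl)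
  have hcmem : ∀ t, c t ∈ Set.Icc (0:ℝ) T :=
    fun t => ⟨le_max_left _ _, max_le hT (min_le_right _ _)⟩
  have hcid : ∀ t ∈ Set.Icc (0:ℝ) T, c t = t := fun t ht => by
    rw [hcdef]; simp only [min_eq_left ht.2, max_eq_right ht.1]
  set P : ℝ → ℝ := p ∘ c with hPdef
  set Q : ℝ → ℝ := q ∘ c with hQdef
  have hPm : Monotone P := fun a b hab => hp (hcmem a) (hcmem b) (hcm hab)
  have hQm : Monotone Q := fun a b hab => hq (hcmem a) (hcmem b) (hcm hab)
  have hlamPQ : ∀ t ∈ Set.Icc (0:ℝ) T, lam t = P t - Q t := by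
    intro t ht
    have := congrFun hpq t
    simp only [Pi.sub_apply] at this
    simp [hPdef, hQdef, Function.comp, hcid t ht, this]
  -- the step-approximation maps
  set τ : ℕ → ℝ → ℝ := fun nn t =>
    r + (⌊(t - r)/((s - r)/((nn:ℝ)+1))⌋ : ℝ) * ((s - r)/((nn:ℝ)+1)) with hτdef
  have hhpos : ∀ nn : ℕ, 0 < (s - r)/((nn:ℝ)+1) := by
    intro nn
    have : (0:ℝ) < s - r := by linarith
    positivity
  have hτmem : ∀ nn : ℕ, ∀ t ∈ Set.Icc r s, τ nn t ∈ Set.Icc r t := by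
    intro nn t ht
    obtain ⟨f1, f2, f3⟩ := floor_approx (hhpos nn) (u := t - r) (by linarith [ht.1])
    exact ⟨by simp only [hτdef]; linarith, by simp only [hτdef]; linarith⟩
  have hτlow : ∀ nn : ℕ, ∀ t ∈ Set.Icc r s, t - (s - r)/((nn:ℝ)+1) ≤ τ nn t := by
    intro nn t ht
    obtain ⟨f1, f2, f3⟩ := floor_approx (hhpos nn) (u := t - r) (by linarith [ht.1])
    simp only [hτdef]; linarith
  have hgm : ∀ nn : ℕ, Measurable (fun t => lam (τ nn t)) := by
    intro nn
    have h1 : Measurable (fun t : ℝ => ⌊(t - r)/((s - r)/((nn:ℝ)+1))⌋) :=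
      Int.measurable_floor.comp ((measurable_id.sub_const r).div_const _)
    have h2 : Measurable (fun k : ℤ => lam (r + (k : ℝ) * ((s - r)/((nn:ℝ)+1)))) :=
      measurable_from_top
    exact h2.comp h1
  have hX'm : AEStronglyMeasurable X' (volume.restrict (Set.Icc r s)) :=
    (hXint.mono_set hsub).aestronglyMeasurable
  have hgint : ∀ nn : ℕ, IntegrableOn (fun t => lam (τ nn t) • X' t) (Set.Icc r s) := by
    intro nn
    refine Integrable.mono' ((hXint.mono_set hsub).norm.const_mul B)
      (((hgm nn).aestronglyMeasurable).smul hX'm) ?_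
    refine (ae_restrict_iff' measurableSet_Icc).2 (ae_of_all _ fun t ht => ?_)
    rw [norm_smul, Real.norm_eq_abs]
    have hmem := hτmem nn t ht
    have : τ nn t ∈ Set.Icc (0:ℝ) T :=
      ⟨le_trans hr hmem.1, le_trans hmem.2 (le_trans ht.2 hsT)⟩
    exact mul_le_mul_of_nonneg_right (hB _ this) (norm_nonneg _)
  -- interval endpoints facts
  have httn' : ∀ n : ℕ, r + ((n:ℝ)+1) * ((s - r)/((n:ℝ)+1)) = s := by
    intro n
    have hne : ((n:ℝ)+1) ≠ 0 := by positivity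
    field_simp; ring
  -- the key estimate for each n
  have key : ∀ n : ℕ,
      ‖lam s • X s - lam r • X r - ∫ t in r..s, lam (τ n t) • X' t‖ ≤ V * C := by
    intro n
    have hpos := hhpos n
    set tt : ℕ → ℝ := fun i => r + (i:ℝ) * ((s - r)/((n:ℝ)+1)) with httdef
    have htt0 : tt 0 = r := by simp [httdef]
    have httn : tt (n+1) = s := by
      simp only [httdef]; push_cast; exact httn' n
    have httmono : ∀ i j : ℕ, i ≤ j → tt i ≤ tt j := by
      intro i j hij
      simp only [httdef]
      have : (i:ℝ) ≤ (j:ℝ) := by exact_mod_cast hij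
      nlinarith
    have htti_mem : ∀ i : ℕ, i ≤ n+1 → tt i ∈ Set.Icc r s := by
      intro i hi
      refine ⟨?_, ?_⟩
      · simp only [httdef]
        nlinarith [mul_nonneg (Nat.cast_nonneg i : (0:ℝ) ≤ i) (hhpos n).le]
      · have := httmono i (n+1) hi
        rw [httn] at this; exact this
    have hτeq : ∀ i : ℕ, ∀ t ∈ Set.Ioo (tt i) (tt (i+1)), τ n t = tt i := by
      intro i t ht
      have h1 : (i:ℝ) < (t - r)/((s - r)/((n:ℝ)+1)) := by
        rw [lt_div_iff₀ hpos]
        have := ht.1; simp only [httdef] at this; linarith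
      have h2 : (t - r)/((s - r)/((n:ℝ)+1)) < (i:ℝ) + 1 := by
        rw [div_lt_iff₀ hpos]
        have := ht.2; simp only [httdef] at this; push_cast at this ⊢; linarith
      have hfl : ⌊(t - r)/((s - r)/((n:ℝ)+1))⌋ = (i:ℤ) := by
        rw [Int.floor_eq_iff]
        constructor
        · push_cast; linarith
        · push_cast; linarith
      simp only [hτdef, hfl, httdef]
      push_cast; ring
    have hintadj : ∀ i : ℕ, i < n+1 →
        IntervalIntegrable (fun t => lam (τ n t) • X' t) volume (tt i) (tt (i+1)) := by
      intro i hi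
      refine ((hgint n).mono_set ?_).intervalIntegrable
      rw [Set.uIcc_of_le (httmono i (i+1) (by omega))]
      exact Set.Icc_subset_Icc (htti_mem i (by omega)).1 (htti_mem (i+1) (by omega)).2
    have hpiece : ∀ i ∈ Finset.range (n+1),
        ∫ t in tt i..tt (i+1), lam (τ n t) • X' t
          = lam (tt i) • X (tt (i+1)) - lam (tt i) • X (tt i) := by
      intro i hi
      rw [Finset.mem_range] at hi
      have hle : tt i ≤ tt (i+1) := httmono i (i+1) (by omega)
      have hstep : ∫ t in tt i..tt (i+1), lam (τ n t) • X' t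
          = ∫ t in tt i..tt (i+1), lam (tt i) • X' t := by
        apply intervalIntegral.integral_congr_ae
        have hne : ∀ᵐ t : ℝ, t ≠ tt (i+1) := by
          have := measure_eq_zero_iff_ae_notMem.mp (measure_singleton (tt (i+1)) (μ := volume))
          filter_upwards [this] with t ht
          simpa using ht
        filter_upwards [hne] with t htne htmem
        rw [Set.uIoc_of_le hle] at htmem
        rw [hτeq i t ⟨htmem.1, lt_of_le_of_ne htmem.2 htne⟩]
      rw [hstep, intervalIntegral.integral_smul,
        ← hXrep (tt i) (hsub (htti_mem i (by omega))) (tt (i+1)) (hsub (htti_mem (i+1) (by omega))),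
        smul_sub]
    have tele : ∑ i ∈ Finset.range (n+1),
        (lam (tt (i+1)) • X (tt (i+1)) - lam (tt i) • X (tt i))
          = lam s • X s - lam r • X r := by
      rw [Finset.sum_range_sub (fun i => lam (tt i) • X (tt i)), httn, htt0]
    have hI : ∫ t in r..s, lam (τ n t) • X' t
        = ∑ i ∈ Finset.range (n+1), (lam (tt i) • X (tt (i+1)) - lam (tt i) • X (tt i)) := by
      have h1 := intervalIntegral.sum_integral_adjacent_intervals hintadj
      rw [htt0, httn] at h1
      rw [← h1]
      exact Finset.sum_congr rfl hpiece
    have hid : lam s • X s - lam r • X r - ∫ t in r..s, lam (τ n t) • X' t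
        = ∑ i ∈ Finset.range (n+1), (lam (tt (i+1)) - lam (tt i)) • X (tt (i+1)) := by
      rw [hI, ← tele, ← Finset.sum_sub_distrib]
      refine Finset.sum_congr rfl fun i _ => ?_
      rw [sub_smul]; abel
    have hvar : ∑ i ∈ Finset.range (n+1), |lam (tt (i+1)) - lam (tt i)| ≤ V := by
      have hu : Monotone (fun i : ℕ => tt (min i (n+1))) := by
        intro a b hab
        exact httmono _ _ (min_le_min hab le_rfl)
      have hus : ∀ i, tt (min i (n+1)) ∈ Set.Icc r s := fun i => htti_mem _ (min_le_right _ _)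
      have hsl := eVariationOn.sum_le (f := lam) (n := n+1) hu hus
      have heq : ∀ i ∈ Finset.range (n+1),
          edist ((fun j => lam (tt (min j (n+1)))) (i+1)) ((fun j => lam (tt (min j (n+1)))) i)
            = ENNReal.ofReal |lam (tt (i+1)) - lam (tt i)| := by
        intro i hi
        rw [Finset.mem_range] at hi
        simp only [min_eq_left (by omega : i+1 ≤ n+1), min_eq_left (by omega : i ≤ n+1)]
        rw [edist_dist, Real.dist_eq]
      rw [Finset.sum_congr rfl heq,
        ← ENNReal.ofReal_sum_of_nonneg (fun i _ => abs_nonneg _)] at hsl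
      exact (ENNReal.ofReal_le_iff_le_toReal hVtop).1 hsl
    rw [hid]
    refine le_trans (norm_sum_le _ _) ?_
    have hterm : ∀ i ∈ Finset.range (n+1),
        ‖(lam (tt (i+1)) - lam (tt i)) • X (tt (i+1))‖ ≤ |lam (tt (i+1)) - lam (tt i)| * C := by
      intro i hi
      rw [Finset.mem_range] at hi
      rw [norm_smul, Real.norm_eq_abs]
      exact mul_le_mul_of_nonneg_left (hC _ (htti_mem _ (by omega))) (abs_nonneg _)
    refine le_trans (Finset.sum_le_sum hterm) ?_
    rw [← Finset.sum_mul]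
    exact mul_le_mul_of_nonneg_right hvar hC0
  -- convergence of the approximating integrals
  have hDP : volume {t : ℝ | ¬ContinuousAt P t} = 0 :=
    (hPm.countable_not_continuousAt).measure_zero _
  have hDQ : volume {t : ℝ | ¬ContinuousAt Q t} = 0 :=
    (hQm.countable_not_continuousAt).measure_zero _
  have hlim : Tendsto (fun nn : ℕ => ∫ t in r..s, lam (τ nn t) • X' t) atTop
      (𝓝 (∫ t in r..s, lam t • X' t)) := by
    have hXint' : IntegrableOn X' (Set.Ioc r s) :=
      hXint.mono_set (Set.Ioc_subset_Icc_self.trans hsub)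
    simp only [intervalIntegral.integral_of_le hrs]
    apply tendsto_integral_of_dominated_convergence (bound := fun t => B * ‖X' t‖)
    · intro nn
      exact ((hgm nn).aestronglyMeasurable).smul hXint'.aestronglyMeasurable
    · exact hXint'.norm.const_mul B
    · intro nn
      refine (ae_restrict_iff' measurableSet_Ioc).2 (ae_of_all _ fun t ht => ?_)
      rw [norm_smul, Real.norm_eq_abs]
      have hmem := hτmem nn t (Set.Ioc_subset_Icc_self ht)
      exact mul_le_mul_of_nonneg_right
        (hB _ ⟨le_trans hr hmem.1, le_trans hmem.2 (le_trans (Set.Ioc_subset_Icc_self ht).2 hsT)⟩)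
        (norm_nonneg _)
    · have h3 : ∀ᵐ t ∂(volume.restrict (Set.Ioc r s)), t ∈ Set.Ioc r s :=
        ae_restrict_mem measurableSet_Ioc
      have h1 : ∀ᵐ t ∂(volume.restrict (Set.Ioc r s)), ContinuousAt P t :=
        ae_restrict_of_ae (ae_iff.mpr (by simpa using hDP))
      have h2 : ∀ᵐ t ∂(volume.restrict (Set.Ioc r s)), ContinuousAt Q t :=
        ae_restrict_of_ae (ae_iff.mpr (by simpa using hDQ))
      filter_upwards [h1, h2, h3] with t hPc hQc hts
      have htIcc : t ∈ Set.Icc r s := Set.Ioc_subset_Icc_self hts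
      have htT : t ∈ Set.Icc (0:ℝ) T := hsub htIcc
      have hτt : Tendsto (fun nn : ℕ => τ nn t) atTop (𝓝 t) := by
        have hup : ∀ nn : ℕ, τ nn t ≤ t := fun nn => (hτmem nn t htIcc).2
        have hlo : ∀ nn : ℕ, t - (s - r)/((nn:ℝ)+1) ≤ τ nn t := fun nn => hτlow nn t htIcc
        have hden : Tendsto (fun nn : ℕ => ((nn:ℝ)+1)) atTop atTop :=
          tendsto_atTop_add_const_right atTop 1 tendsto_natCast_atTop_atTop
        have hzero : Tendsto (fun nn : ℕ => (s - r)/((nn:ℝ)+1)) atTop (𝓝 0) :=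
          Tendsto.div_atTop tendsto_const_nhds hden
        have hh0 : Tendsto (fun nn : ℕ => t - (s - r)/((nn:ℝ)+1)) atTop (𝓝 t) := by
          simpa using tendsto_const_nhds.sub hzero
        exact tendsto_of_tendsto_of_tendsto_of_le_of_le hh0 tendsto_const_nhds hlo hup
      have hτmemT : ∀ nn : ℕ, τ nn t ∈ Set.Icc (0:ℝ) T := fun nn =>
        ⟨le_trans hr (hτmem nn t htIcc).1, le_trans (hτmem nn t htIcc).2 htT.2⟩
      have hlamτ : Tendsto (fun nn : ℕ => lam (τ nn t)) atTop (𝓝 (lam t)) := by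
        have hPt : Tendsto (fun nn => P (τ nn t)) atTop (𝓝 (P t)) := hPc.tendsto.comp hτt
        have hQt : Tendsto (fun nn => Q (τ nn t)) atTop (𝓝 (Q t)) := hQc.tendsto.comp hτt
        rw [hlamPQ t htT]
        exact (hPt.sub hQt).congr fun nn => (hlamPQ _ (hτmemT nn)).symm
      exact hlamτ.smul_const (X' t)
  have hfin : Tendsto (fun nn : ℕ => ‖lam s • X s - lam r • X r - ∫ t in r..s, lam (τ nn t) • X' t‖)
      atTop (𝓝 ‖lam s • X s - lam r • X r - ∫ t in r..s, lam t • X' t‖) :=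
    ((tendsto_const_nhds (x := lam s • X s - lam r • X r)).sub hlim).norm
  exact le_of_tendsto hfin (Filter.Eventually.of_forall key)


theorem stmt15 (φ : H → EReal) (ψ : H → ℝ) (ψ' : H → H) (hst : Standing φ ψ ψ')
    (Lψ : ℝ) (hLψ : 0 ≤ Lψ)
    (hlip : ∀ a b : H, ‖ψ' a - ψ' b‖ ≤ Lψ * ‖a - b‖)
    (lam : ℝ → ℝ) (T c₀ : ℝ) (hT : 0 < T) (hc₀ : 0 < c₀)
    (hBV : eVariationOn lam (Set.Icc 0 T) ≠ ⊤)
    (hinf : ∀ t ∈ Set.Icc (0:ℝ) T, c₀ ≤ lam t)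
    (x₀ v₀ : H) (hv₀ : IsSubdiff φ x₀ v₀)
    (x v x' v' y w y' w' : ℝ → H)
    (sol₁ : StrongSol φ ψ' lam T x v x' v')
    (sol₂ : StrongSol φ ψ' lam T y w y' w')
    (hx0 : x 0 = x₀) (hv0 : v 0 = v₀) (hy0 : y 0 = x₀) (hw0 : w 0 = v₀) :
    ∀ t ∈ Set.Icc (0:ℝ) T, x t = y t ∧ v t = w t := by
  obtain ⟨⟨hbot, hpr2, _, _⟩, _, _, _⟩ := hst
  have hT0 : (0:ℝ) ≤ T := hT.le
  have h0mem : (0:ℝ) ∈ Set.Icc (0:ℝ) T := ⟨le_rfl, hT0⟩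
  -- interval integrability from IntegrableOn Icc
  have hii : ∀ (f : ℝ → H), IntegrableOn f (Set.Icc 0 T) →
      ∀ a ∈ Set.Icc (0:ℝ) T, ∀ b ∈ Set.Icc (0:ℝ) T, IntervalIntegrable f volume a b := by
    intro f hf a ha b hb
    exact (hf.mono_set (Set.uIcc_subset_Icc ha hb)).intervalIntegrable
  -- continuity of the four curves
  have hcont : ∀ (z z' : ℝ → H), IntegrableOn z' (Set.Icc 0 T) →
      (∀ t ∈ Set.Icc (0:ℝ) T, z t = z 0 + ∫ u in (0:ℝ)..t, z' u) →
      ContinuousOn z (Set.Icc 0 T) := by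
    intro z z' hint hrep
    have h1 : ContinuousOn (fun t => z 0 + ∫ u in (0:ℝ)..t, z' u) (Set.Icc 0 T) := by
      refine continuousOn_const.add ?_
      have h2 := intervalIntegral.continuousOn_primitive (f := z') (a := 0) (b := T)
        (μ := volume) hint
      refine h2.congr fun t ht => ?_
      rw [intervalIntegral.integral_of_le ht.1]
    exact h1.congr hrep
  have hxc : ContinuousOn x (Set.Icc 0 T) := hcont x x' sol₁.xint sol₁.xrep
  have hyc : ContinuousOn y (Set.Icc 0 T) := hcont y y' sol₂.xint sol₂.xrep
  have hvc : ContinuousOn v (Set.Icc 0 T) := hcont v v' sol₁.vint sol₁.vrep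
  have hwc : ContinuousOn w (Set.Icc 0 T) := hcont w w' sol₂.vint sol₂.vrep
  -- difference curves
  set X : ℝ → H := fun t => x t - y t with hXdef
  set V : ℝ → H := fun t => v t - w t with hVdef
  set XD : ℝ → H := fun t => x' t - y' t with hXDdef
  set VD : ℝ → H := fun t => v' t - w' t with hVDdef
  set Dψ : ℝ → H := fun t => ψ' (x t) - ψ' (y t) with hDψdef
  set Z : ℝ → H := fun t => lam t • X t + V t with hZdef
  have hXc : ContinuousOn X (Set.Icc 0 T) := hxc.sub hyc
  have hVc : ContinuousOn V (Set.Icc 0 T) := hvc.sub hwc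
  have hψlip : Continuous ψ' := by
    have : LipschitzWith (Real.toNNReal Lψ) ψ' := by
      refine LipschitzWith.of_dist_le_mul fun a b => ?_
      rw [dist_eq_norm, Real.coe_toNNReal _ hLψ, dist_eq_norm]
      exact hlip a b
    exact this.continuous
  have hDψc : ContinuousOn Dψ (Set.Icc 0 T) :=
    (hψlip.comp_continuousOn hxc).sub (hψlip.comp_continuousOn hyc)
  have hXDint : IntegrableOn XD (Set.Icc 0 T) := sol₁.xint.sub sol₂.xint
  have hVDint : IntegrableOn VD (Set.Icc 0 T) := sol₁.vint.sub sol₂.vint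
  -- representation of differences
  have hrepgen : ∀ (z z' : ℝ → H), IntegrableOn z' (Set.Icc 0 T) →
      (∀ t ∈ Set.Icc (0:ℝ) T, z t = z 0 + ∫ u in (0:ℝ)..t, z' u) →
      ∀ a ∈ Set.Icc (0:ℝ) T, ∀ b ∈ Set.Icc (0:ℝ) T, z b - z a = ∫ u in a..b, z' u := by
    intro z z' hint hrep a ha b hb
    rw [hrep b hb, hrep a ha,
      show (z 0 + ∫ u in (0:ℝ)..b, z' u) - (z 0 + ∫ u in (0:ℝ)..a, z' u)
        = (∫ u in (0:ℝ)..b, z' u) - ∫ u in (0:ℝ)..a, z' u by abel]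
    exact intervalIntegral.integral_interval_sub_left
      (hii _ hint 0 h0mem b hb) (hii _ hint 0 h0mem a ha)
  have hXrepI : ∀ a ∈ Set.Icc (0:ℝ) T, ∀ b ∈ Set.Icc (0:ℝ) T,
      X b - X a = ∫ u in a..b, XD u := by
    intro a ha b hb
    have h1 := hrepgen x x' sol₁.xint sol₁.xrep a ha b hb
    have h2 := hrepgen y y' sol₂.xint sol₂.xrep a ha b hb
    simp only [hXdef, hXDdef]
    rw [show x b - y b - (x a - y a) = (x b - x a) - (y b - y a) by abel, h1, h2,
      ← intervalIntegral.integral_sub (hii _ sol₁.xint a ha b hb) (hii _ sol₂.xint a ha b hb)]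
  have hVrepI : ∀ a ∈ Set.Icc (0:ℝ) T, ∀ b ∈ Set.Icc (0:ℝ) T,
      V b - V a = ∫ u in a..b, VD u := by
    intro a ha b hb
    have h1 := hrepgen v v' sol₁.vint sol₁.vrep a ha b hb
    have h2 := hrepgen w w' sol₂.vint sol₂.vrep a ha b hb
    simp only [hVdef, hVDdef]
    rw [show v b - w b - (v a - w a) = (v b - v a) - (w b - w a) by abel, h1, h2,
      ← intervalIntegral.integral_sub (hii _ sol₁.vint a ha b hb) (hii _ sol₂.vint a ha b hb)]
  -- monotonicity of the subdifferential
  have hmono : ∀ t ∈ Set.Icc (0:ℝ) T, 0 ≤ (inner ℝ (V t) (X t) : ℝ) := fun t ht =>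
    subdiff_mono hbot hpr2 (sol₁.subdiff t ht) (sol₂.subdiff t ht)
  -- coercivity : θ ≤ ‖Z‖
  have hcoer : ∀ t ∈ Set.Icc (0:ℝ) T, c₀ * ‖X t‖ ≤ ‖Z t‖ ∧ ‖V t‖ ≤ ‖Z t‖ := by
    intro t ht
    have hsq : ‖Z t‖^2 = ‖lam t • X t‖^2 + 2 * (lam t * (inner ℝ (X t) (V t) : ℝ)) + ‖V t‖^2 := by
      simp only [hZdef]
      rw [show ((2:ℝ) * (lam t * (inner ℝ (X t) (V t) : ℝ)))
          = 2 * (inner ℝ (lam t • X t) (V t) : ℝ) by rw [real_inner_smul_left]]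
      exact norm_add_sq_real _ _
    have hip : 0 ≤ (inner ℝ (X t) (V t) : ℝ) := by
      rw [real_inner_comm]; exact hmono t ht
    have hlam := hinf t ht
    have h1 : ‖lam t • X t‖ = |lam t| * ‖X t‖ := by rw [norm_smul, Real.norm_eq_abs]
    have h2 : c₀ * ‖X t‖ ≤ ‖lam t • X t‖ := by
      rw [h1, abs_of_nonneg (le_trans hc₀.le hlam)]
      exact mul_le_mul_of_nonneg_right hlam (norm_nonneg _)
    have h3 : 0 ≤ lam t * (inner ℝ (X t) (V t) : ℝ) :=
      mul_nonneg (le_trans hc₀.le hlam) hip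
    have h4 : (c₀ * ‖X t‖)^2 ≤ ‖lam t • X t‖^2 := by
      nlinarith [mul_nonneg hc₀.le (norm_nonneg (X t)), norm_nonneg (lam t • X t)]
    constructor
    · refine sq_le_imp (mul_nonneg hc₀.le (norm_nonneg _)) (norm_nonneg _) ?_
      nlinarith [sq_nonneg (‖V t‖), h4]
    · refine sq_le_imp (norm_nonneg _) (norm_nonneg _) ?_
      nlinarith [sq_nonneg (‖lam t • X t‖)]
  -- integrability of lam • XD
  have hlamXD : IntegrableOn (fun t => lam t • XD t) (Set.Icc 0 T) :=
    bv_smul_integrable lam T hT0 hBV XD hXDint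
  -- the key estimate
  have hZest : ∀ r ∈ Set.Icc (0:ℝ) T, ∀ s ∈ Set.Icc (0:ℝ) T, r ≤ s → ∀ C D : ℝ,
      (∀ t ∈ Set.Icc r s, ‖X t‖ ≤ C) → (∀ t ∈ Set.Icc r s, ‖V t‖ + Lψ * ‖X t‖ ≤ D) →
      ‖Z s - Z r‖ ≤ (eVariationOn lam (Set.Icc r s)).toReal * C + D * (s - r) := by
    intro r hrI s hsI hrs C D hC hD
    have hsubI : Set.Icc r s ⊆ Set.Icc (0:ℝ) T := Set.Icc_subset_Icc hrI.1 hsI.2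
    have hiiV : IntervalIntegrable V volume r s :=
      (hVc.mono (Set.uIcc_subset_Icc hrI hsI)).intervalIntegrable
    have hiiDψ : IntervalIntegrable Dψ volume r s :=
      (hDψc.mono (Set.uIcc_subset_Icc hrI hsI)).intervalIntegrable
    have hiilamXD : IntervalIntegrable (fun t => lam t • XD t) volume r s :=
      hii _ hlamXD r hrI s hsI
    -- equation for the difference, a.e. on the relevant interval
    have hae : ∀ᵐ t ∂volume, t ∈ Set.uIoc r s →
        VD t = -(lam t • XD t + (V t + Dψ t)) := by
      have e₁ := (ae_restrict_iff' measurableSet_Ioo).1 sol₁.eqn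
      have e₂ := (ae_restrict_iff' measurableSet_Ioo).1 sol₂.eqn
      have hne : ∀ᵐ t : ℝ, t ≠ s := by
        have := measure_eq_zero_iff_ae_notMem.mp (measure_singleton (s) (μ := volume))
        filter_upwards [this] with t ht
        simpa using ht
      filter_upwards [e₁, e₂, hne] with t h1 h2 hts hmem
      rw [Set.uIoc_of_le hrs] at hmem
      have htoo : t ∈ Set.Ioo (0:ℝ) T :=
        ⟨lt_of_le_of_lt hrI.1 hmem.1,
          lt_of_lt_of_le (lt_of_le_of_ne hmem.2 hts) hsI.2⟩
      have h1' := h1 htoo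
      have h2' := h2 htoo
      have hx1 : v' t = -(lam t • x' t) - v t - ψ' (x t) := by
        apply eq_of_sub_eq_zero
        calc v' t - (-(lam t • x' t) - v t - ψ' (x t))
            = lam t • x' t + v' t + v t + ψ' (x t) := by abel
          _ = 0 := h1'
      have hx2 : w' t = -(lam t • y' t) - w t - ψ' (y t) := by
        apply eq_of_sub_eq_zero
        calc w' t - (-(lam t • y' t) - w t - ψ' (y t))
            = lam t • y' t + w' t + w t + ψ' (y t) := by abel
          _ = 0 := h2'
      show v' t - w' t = -(lam t • (x' t - y' t) + ((v t - w t) + (ψ' (x t) - ψ' (y t))))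
      rw [hx1, hx2, smul_sub]
      abel
    have hVid : V s - V r
        = -((∫ t in r..s, lam t • XD t) + ((∫ t in r..s, V t) + ∫ t in r..s, Dψ t)) := by
      rw [hVrepI r hrI s hsI]
      rw [intervalIntegral.integral_congr_ae hae]
      rw [intervalIntegral.integral_neg,
        intervalIntegral.integral_add hiilamXD (hiiV.add hiiDψ),
        intervalIntegral.integral_add hiiV hiiDψ]
    have hZid : Z s - Z r
        = (lam s • X s - lam r • X r - ∫ t in r..s, lam t • XD t)
          - ((∫ t in r..s, V t) + ∫ t in r..s, Dψ t) := by
      simp only [hZdef]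
      rw [show lam s • X s + V s - (lam r • X r + V r)
          = (lam s • X s - lam r • X r) + (V s - V r) by abel, hVid]
      abel
    rw [hZid]
    refine le_trans (norm_sub_le _ _) (add_le_add
      (ibp_est lam T hT0 hBV X XD hXDint hXrepI r s hrI.1 hrs hsI.2 C hC) ?_)
    rw [← intervalIntegral.integral_add hiiV hiiDψ]
    have hb := intervalIntegral.norm_integral_le_of_norm_le_const
      (C := D) (f := fun t => V t + Dψ t) (a := r) (b := s) ?_
    · rw [abs_of_nonneg (by linarith)] at hb
      exact hb
    · intro t ht
      rw [Set.uIoc_of_le hrs] at ht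
      have htm : t ∈ Set.Icc r s := Set.Ioc_subset_Icc_self ht
      refine le_trans (norm_add_le _ _) (le_trans (add_le_add (le_refl _) ?_) (hD t htm))
      exact hlip (x t) (y t)
  -- variation bookkeeping
  set K := (eVariationOn lam (Set.Icc (0:ℝ) T)).toReal with hKdef
  have hK0 : 0 ≤ K := ENNReal.toReal_nonneg
  have hvarfin : ∀ r s : ℝ, 0 ≤ r → s ≤ T → eVariationOn lam (Set.Icc r s) ≠ ⊤ := by
    intro r s h0 hsT
    exact ne_top_of_le_ne_top hBV (eVariationOn.mono lam (Set.Icc_subset_Icc h0 hsT))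
  have hvarK : ∀ r s : ℝ, 0 ≤ r → s ≤ T → (eVariationOn lam (Set.Icc r s)).toReal ≤ K := by
    intro r s h0 hsT
    exact ENNReal.toReal_mono hBV (eVariationOn.mono lam (Set.Icc_subset_Icc h0 hsT))
  set W : ℝ → ℝ := fun t => (eVariationOn lam (Set.Icc (0:ℝ) t)).toReal with hWdef
  have hWmono : ∀ a b : ℝ, 0 ≤ a → a ≤ b → b ≤ T → W a ≤ W b := fun a b h0 hab hbT =>
    ENNReal.toReal_mono (hvarfin 0 b le_rfl hbT)
      (eVariationOn.mono lam (Set.Icc_subset_Icc le_rfl hab))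
  have hWadd : ∀ u sb : ℝ, 0 ≤ u → u ≤ sb → sb ≤ T →
      (eVariationOn lam (Set.Icc u sb)).toReal = W sb - W u := by
    intro u sb h0u husb hsbT
    have h := eVariationOn.Icc_add_Icc lam (s := Set.Icc (0:ℝ) T) h0u husb
      ⟨h0u, le_trans husb hsbT⟩
    rw [Set.inter_eq_self_of_subset_right (Set.Icc_subset_Icc le_rfl (le_trans husb hsbT)),
      Set.inter_eq_self_of_subset_right (Set.Icc_subset_Icc h0u hsbT),
      Set.inter_eq_self_of_subset_right (Set.Icc_subset_Icc le_rfl hsbT)] at h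
    have h1 : (eVariationOn lam (Set.Icc (0:ℝ) u) + eVariationOn lam (Set.Icc u sb)).toReal
        = W sb := by rw [h]
    rw [ENNReal.toReal_add (hvarfin 0 u le_rfl (le_trans husb hsbT)) (hvarfin u sb h0u hsbT)]
      at h1
    simp only [hWdef]
    linarith
  -- the comparison function θ
  set θ : ℝ → ℝ := fun t => max (c₀ * ‖X t‖) ‖V t‖ with hθdef
  have hθc : ContinuousOn θ (Set.Icc 0 T) := by simpa using (continuousOn_const.mul hXc.norm).sup hVc.norm
  have hθ0 : ∀ t, 0 ≤ θ t := fun t => le_trans (norm_nonneg _) (le_max_right _ _)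
  have hXθ : ∀ t, c₀ * ‖X t‖ ≤ θ t := fun t => le_max_left _ _
  have hVθ : ∀ t, ‖V t‖ ≤ θ t := fun t => le_max_right _ _
  have hθZ : ∀ t ∈ Set.Icc (0:ℝ) T, θ t ≤ ‖Z t‖ := fun t ht =>
    max_le (hcoer t ht).1 (hcoer t ht).2
  have hXb : ∀ t, ‖X t‖ ≤ θ t / c₀ := by
    intro t
    rw [le_div_iff₀ hc₀]
    calc ‖X t‖ * c₀ = c₀ * ‖X t‖ := by ring
      _ ≤ θ t := hXθ t
  have hθzeroXV : ∀ t, θ t = 0 → X t = 0 ∧ V t = 0 := by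
    intro t ht
    have h1 := hXθ t
    have h2 := hVθ t
    rw [ht] at h1 h2
    constructor
    · have h3 : ‖X t‖ ≤ 0 := by nlinarith [norm_nonneg (X t)]
      exact norm_le_zero_iff.1 h3
    · exact norm_le_zero_iff.1 h2
  -- the set where everything vanishes
  set A := {sa : ℝ | sa ∈ Set.Icc (0:ℝ) T ∧ ∀ t ∈ Set.Icc (0:ℝ) sa, θ t = 0} with hAdef
  have hθzero0 : θ 0 = 0 := by
    simp only [hθdef, hXdef, hVdef]
    rw [hx0, hy0, hv0, hw0]
    simp
  have h0A : (0:ℝ) ∈ A := ⟨h0mem, fun t ht => by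
    have : t = 0 := le_antisymm ht.2 ht.1
    rw [this]; exact hθzero0⟩
  have hAne : A.Nonempty := ⟨0, h0A⟩
  have hbddA : BddAbove A := ⟨T, fun a ha => ha.1.2⟩
  set s₀ := sSup A with hs₀def
  have hs₀mem : s₀ ∈ Set.Icc (0:ℝ) T := ⟨le_csSup hbddA h0A, csSup_le hAne fun a ha => ha.1.2⟩
  have hθlt : ∀ t, 0 ≤ t → t < s₀ → θ t = 0 := by
    intro t ht0 hts
    obtain ⟨a, haA, hta⟩ := exists_lt_of_lt_csSup hAne hts
    exact haA.2 t ⟨ht0, hta.le⟩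
  have hθs₀ : θ s₀ = 0 := by
    rcases eq_or_lt_of_le hs₀mem.1 with heq | hpos
    · rw [← heq]; exact hθzero0
    · set g : ℕ → ℝ := fun n => s₀ - s₀/((n:ℝ)+1) with hgdef
      have hgmem : ∀ n : ℕ, g n ∈ Set.Icc (0:ℝ) T ∧ g n < s₀ := by
        intro n
        have hn1 : (0:ℝ) < (n:ℝ)+1 := by positivity
        have hd : 0 < s₀/((n:ℝ)+1) := div_pos hpos hn1
        have hd2 : s₀/((n:ℝ)+1) ≤ s₀ := div_le_self hpos.le (by
          have : (0:ℝ) ≤ (n:ℝ) := Nat.cast_nonneg n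
          linarith)
        exact ⟨⟨by simp only [hgdef]; linarith,
          by simp only [hgdef]; linarith [hs₀mem.2]⟩,
          by simp only [hgdef]; linarith⟩
      have hgz : ∀ n, θ (g n) = 0 := fun n => hθlt _ (hgmem n).1.1 (hgmem n).2
      have hgt : Tendsto g atTop (𝓝 s₀) := by
        have hden : Tendsto (fun nn : ℕ => ((nn:ℝ)+1)) atTop atTop :=
          tendsto_atTop_add_const_right atTop 1 tendsto_natCast_atTop_atTop
        have hzero : Tendsto (fun nn : ℕ => s₀/((nn:ℝ)+1)) atTop (𝓝 0) :=
          Tendsto.div_atTop tendsto_const_nhds hden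
        have := (tendsto_const_nhds (x := s₀) (f := atTop (α := ℕ))).sub hzero
        simpa [hgdef] using this
      have hcw : Tendsto θ (𝓝[Set.Icc (0:ℝ) T] s₀) (𝓝 (θ s₀)) := hθc s₀ hs₀mem
      have hgt' : Tendsto g atTop (𝓝[Set.Icc (0:ℝ) T] s₀) :=
        tendsto_nhdsWithin_of_tendsto_nhds_of_eventually_within g hgt
          (Filter.Eventually.of_forall fun n => (hgmem n).1)
      have hcomp' : Tendsto (fun n => θ (g n)) atTop (𝓝 (θ s₀)) := hcw.comp hgt'
      have h0' : Tendsto (fun n => θ (g n)) atTop (𝓝 0) := by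
        simp only [hgz]
        exact tendsto_const_nhds
      exact tendsto_nhds_unique hcomp' h0'
  obtain ⟨hXs₀, hVs₀⟩ := hθzeroXV s₀ hθs₀
  have hZs₀ : Z s₀ = 0 := by simp only [hZdef]; rw [hXs₀, hVs₀]; simp
  -- main claim : s₀ = T
  have hs₀T : s₀ = T := by
    by_contra hne
    have hltT : s₀ < T := lt_of_le_of_ne hs₀mem.2 hne
    set a := sInf (W '' Set.Ioc s₀ T) with hadef
    have himne : (W '' Set.Ioc s₀ T).Nonempty := ⟨W T, ⟨T, ⟨hltT, le_rfl⟩, rfl⟩⟩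
    have himbdd : BddBelow (W '' Set.Ioc s₀ T) := ⟨0, fun z hz => by
      obtain ⟨uu, hu, rfl⟩ := hz; exact ENNReal.toReal_nonneg⟩
    obtain ⟨z, hzmem, hz⟩ : ∃ z ∈ W '' Set.Ioc s₀ T, z < a + c₀/8 :=
      Real.lt_sInf_add_pos himne (div_pos hc₀ (by norm_num))
    obtain ⟨t₀', ht₀'mem, rfl⟩ := hzmem
    set E := (1 + Lψ/c₀) with hEdef
    have hE1 : (1:ℝ) ≤ E := by
      have : 0 ≤ Lψ/c₀ := div_nonneg hLψ hc₀.le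
      simp only [hEdef]; linarith
    have hE0 : (0:ℝ) < E := lt_of_lt_of_le one_pos hE1
    set t₀ := min t₀' (s₀ + 1/(8*E)) with ht₀def
    have ht₀pos : s₀ < t₀ := lt_min ht₀'mem.1 (by
      have : (0:ℝ) < 1/(8*E) := div_pos one_pos (by linarith)
      linarith)
    have ht₀T : t₀ ≤ T := le_trans (min_le_left _ _) ht₀'mem.2
    have ht₀0 : (0:ℝ) ≤ t₀ := le_trans hs₀mem.1 ht₀pos.le
    have ht₀E : E * (t₀ - s₀) ≤ 1/8 := by
      have h1 : t₀ ≤ s₀ + 1/(8*E) := min_le_right _ _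
      calc E * (t₀ - s₀) ≤ E * (1/(8*E)) :=
            mul_le_mul_of_nonneg_left (by linarith) hE0.le
        _ = 1/8 := by field_simp
    have hWt₀ : W t₀ ≤ a + c₀/8 :=
      le_trans (hWmono t₀ t₀' ht₀0 (min_le_left _ _) ht₀'mem.2) hz.le
    have haleW : ∀ u, s₀ < u → u ≤ T → a ≤ W u := fun u h1 h2 =>
      csInf_le himbdd ⟨u, ⟨h1, h2⟩, rfl⟩
    -- max of θ on [s₀, t₀]
    have hsubI : Set.Icc s₀ t₀ ⊆ Set.Icc (0:ℝ) T := Set.Icc_subset_Icc hs₀mem.1 ht₀T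
    obtain ⟨τm, hτmmem, hτmmax⟩ := isCompact_Icc.exists_isMaxOn
      (Set.nonempty_Icc.2 ht₀pos.le) (hθc.mono hsubI)
    set M := θ τm with hMdef
    have hM : ∀ t ∈ Set.Icc s₀ t₀, θ t ≤ M := fun t ht => hτmmax ht
    have hM0 : 0 ≤ M := hθ0 τm
    have hMpos : 0 < M := by
      rcases eq_or_lt_of_le hM0 with heq | h
      · exfalso
        have ht₀A : t₀ ∈ A := ⟨⟨ht₀0, ht₀T⟩, fun t ht => by
          rcases lt_or_ge t s₀ with h1 | h1
          · exact hθlt t ht.1 h1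
          · exact le_antisymm (heq ▸ hM t ⟨h1, ht.2⟩) (hθ0 t)⟩
        have := le_csSup hbddA ht₀A
        rw [← hs₀def] at this
        linarith
      · exact h
    -- choose u via continuity of X at s₀
    have hK1 : (0:ℝ) < 8*(K+1) := by linarith
    have hεpos : 0 < M/(8*(K+1)) := div_pos hMpos hK1
    have hXcw : Tendsto (fun t => ‖X t‖) (𝓝[Set.Icc (0:ℝ) T] s₀) (𝓝 0) := by
      have h1 := (hXc.norm) s₀ hs₀mem
      rw [ContinuousWithinAt] at h1
      rwa [hXs₀, norm_zero] at h1
    have hev : ∀ᶠ t in 𝓝[Set.Icc (0:ℝ) T] s₀, ‖X t‖ < M/(8*(K+1)) :=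
      hXcw (Iio_mem_nhds hεpos)
    obtain ⟨δ, hδpos, hδ⟩ := Metric.mem_nhdsWithin_iff.1 hev
    set u := min (s₀ + δ/2) t₀ with hudef
    have hus₀ : s₀ < u := lt_min (by linarith) ht₀pos
    have hut₀ : u ≤ t₀ := min_le_right _ _
    have hXu : ∀ t ∈ Set.Icc s₀ u, ‖X t‖ ≤ M/(8*(K+1)) := by
      intro t ht
      have htI : t ∈ Set.Icc (0:ℝ) T := hsubI ⟨ht.1, le_trans ht.2 hut₀⟩
      have hball : t ∈ Metric.ball s₀ δ := by
        rw [Metric.mem_ball, Real.dist_eq, abs_of_nonneg (by linarith [ht.1])]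
        have h1 : t ≤ s₀ + δ/2 := le_trans ht.2 (min_le_left _ _)
        linarith
      exact (hδ ⟨hball, htI⟩).le
    -- bounds
    have hDbound : ∀ t ∈ Set.Icc s₀ t₀, ‖V t‖ + Lψ * ‖X t‖ ≤ E * M := by
      intro t ht
      have h1 : ‖V t‖ ≤ M := le_trans (hVθ t) (hM t ht)
      have h2 : ‖X t‖ ≤ M / c₀ := le_trans (hXb t) (by gcongr; exact hM t ht)
      calc ‖V t‖ + Lψ * ‖X t‖ ≤ M + Lψ * (M/c₀) :=
            add_le_add h1 (mul_le_mul_of_nonneg_left h2 hLψ)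
        _ = E * M := by simp only [hEdef]; field_simp
    have hvarsmall : ∀ r s : ℝ, 0 ≤ r → s ≤ T →
        (eVariationOn lam (Set.Icc r s)).toReal * (M/(8*(K+1))) ≤ M/8 := by
      intro r s h0 hsT
      have hvv := hvarK r s h0 hsT
      have hKK1 : (0:ℝ) < K + 1 := by linarith
      calc (eVariationOn lam (Set.Icc r s)).toReal * (M/(8*(K+1)))
          ≤ K * (M/(8*(K+1))) := mul_le_mul_of_nonneg_right hvv hεpos.le
        _ = (M/8) * (K/(K+1)) := by field_simp
        _ ≤ (M/8) * 1 := by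
            refine mul_le_mul_of_nonneg_left ?_ (by linarith)
            rw [div_le_one hKK1]; linarith
        _ = M/8 := by ring
    have hEMsmall : ∀ s : ℝ, s ≤ t₀ → s₀ ≤ s → E*M*(s - s₀) ≤ M/8 := by
      intro s h1 h2
      have h3 : E*(s - s₀) ≤ 1/8 :=
        le_trans (mul_le_mul_of_nonneg_left (by linarith) hE0.le) ht₀E
      calc E*M*(s - s₀) = M*(E*(s - s₀)) := by ring
        _ ≤ M*(1/8) := mul_le_mul_of_nonneg_left h3 hM0
        _ = M/8 := by ring
    -- the half bound
    have hhalf : ∀ s ∈ Set.Icc s₀ t₀, θ s ≤ M/2 := by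
      intro s hs
      have hsI : s ∈ Set.Icc (0:ℝ) T := hsubI hs
      have hθle : θ s ≤ ‖Z s - Z s₀‖ := by rw [hZs₀, sub_zero]; exact hθZ s hsI
      rcases le_or_gt s u with hsu | hus
      · have hest := hZest s₀ hs₀mem s hsI hs.1 (M/(8*(K+1))) (E*M)
          (fun t ht => hXu t ⟨ht.1, le_trans ht.2 hsu⟩)
          (fun t ht => hDbound t ⟨ht.1, le_trans ht.2 hs.2⟩)
        have hb1 := hvarsmall s₀ s hs₀mem.1 hsI.2
        have hb2 := hEMsmall s hs.2 hs.1
        linarith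
      · have huI : u ∈ Set.Icc (0:ℝ) T := hsubI ⟨hus₀.le, hut₀⟩
        have htri : ‖Z s - Z s₀‖ ≤ ‖Z u - Z s₀‖ + ‖Z s - Z u‖ := by
          rw [show Z s - Z s₀ = (Z u - Z s₀) + (Z s - Z u) by abel]
          exact norm_add_le _ _
        have hest1 := hZest s₀ hs₀mem u huI hus₀.le (M/(8*(K+1))) (E*M)
          (fun t ht => hXu t ht)
          (fun t ht => hDbound t ⟨ht.1, le_trans ht.2 hut₀⟩)
        have hest2 := hZest u huI s hsI hus.le (M/c₀) (E*M)
          (fun t ht => le_trans (hXb t) (by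
            gcongr
            exact hM t ⟨le_trans hus₀.le ht.1, le_trans ht.2 hs.2⟩))
          (fun t ht => hDbound t ⟨le_trans hus₀.le ht.1, le_trans ht.2 hs.2⟩)
        have hb1 := hvarsmall s₀ u hs₀mem.1 huI.2
        have hb2 : (eVariationOn lam (Set.Icc u s)).toReal ≤ c₀/8 := by
          rw [hWadd u s (le_trans hs₀mem.1 hus₀.le) hus.le hsI.2]
          have hWs : W s ≤ W t₀ := hWmono s t₀ (le_trans hs₀mem.1 hs.1) hs.2 ht₀T
          have hau : a ≤ W u := haleW u hus₀ huI.2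
          linarith
        have hb2' : (eVariationOn lam (Set.Icc u s)).toReal * (M/c₀) ≤ M/8 := by
          calc (eVariationOn lam (Set.Icc u s)).toReal * (M/c₀)
              ≤ (c₀/8) * (M/c₀) :=
                mul_le_mul_of_nonneg_right hb2 (div_nonneg hM0 hc₀.le)
            _ = M/8 := by field_simp
        have hb3u : E*M*(u - s₀) ≤ E*M*(s - s₀) := by
          have : (0:ℝ) ≤ E*M := mul_nonneg hE0.le hM0
          nlinarith [hus.le]
        have hb3 := hEMsmall s hs.2 hs.1
        have hb4 : E*M*(u - s₀) + E*M*(s - u) ≤ M/8 := by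
          have heq : E*M*(u - s₀) + E*M*(s - u) = E*M*(s - s₀) := by ring
          rw [heq]; exact hb3
        linarith
    have hfinal := hhalf τm hτmmem
    rw [← hMdef] at hfinal
    linarith
  -- conclusion
  intro t ht
  have hθt : θ t = 0 := by
    rcases eq_or_lt_of_le ht.2 with heq | hlt2
    · rw [heq, ← hs₀T]; exact hθs₀
    · exact hθlt t ht.1 (by rw [hs₀T]; exact hlt2)
  obtain ⟨hX0, hV0⟩ := hθzeroXV t hθt
  simp only [hXdef] at hX0
  simp only [hVdef] at hV0
  exact ⟨sub_eq_zero.1 hX0, sub_eq_zero.1 hV0⟩
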